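/- (Termination bound after Case III) In the parity-seeking deletion algorithm for 2-3 red-black trees, once Case III is applied (x black with red sibling y), the deficiency is resolved after at most two further rule applications: if x's new black sibling C has a red child, one application of the Case II rotation rules resolves the deficiency; otherwise recoloring C red transfers the deficiency to the now-red former parent B, which is immediately resolved by Case I. -/
import Mathlib


inductive Color where
  | red : Color
  | black : Color
deriving DecidableEq

inductive RBTree (α : Type) where
  | nil : RBTree α
  | node : Color → RBTree α → α → RBTree α → RBTree α

namespace RBTree

variable {α : Type}

/-- The color of a tree's root; external (nil) positions count as black. -/
def color : RBTree α → Color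
  | .nil => Color.black
  | .node c _ _ _ => c

/-- Inorder traversal of the keys. -/
def inorder : RBTree α → List α
  | .nil => []
  | .node _ l k r => inorder l ++ k :: inorder r

/-- `BH t n`: every path from the root of `t` to an external node contains
exactly `n` black nodes (property (3)). -/
inductive BH : RBTree α → ℕ → Prop where
  | nil : BH RBTree.nil 0
  | red {l r : RBTree α} {k : α} {n : ℕ} :
      BH l n → BH r n → BH (RBTree.node Color.red l k r) n
  | black {l r : RBTree α} {k : α} {n : ℕ} :
      BH l n → BH r n → BH (RBTree.node Color.black l k r) (n + 1)

/-- Property (2): every red node has black children (equivalently, a red node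
never has a red parent). -/
def NoRedRed : RBTree α → Prop
  | .nil => True
  | .node c l _ r =>
      (c = Color.red → color l = Color.black ∧ color r = Color.black) ∧
      NoRedRed l ∧ NoRedRed r

/-- The 2-3 condition: no node has two red children. -/
def No2Red : RBTree α → Prop
  | .nil => True
  | .node _ l _ r =>
      ¬(color l = Color.red ∧ color r = Color.red) ∧ No2Red l ∧ No2Red r

/-- A red-black tree: black root, no red-red violation, uniform black counts. -/
def IsRB (t : RBTree α) : Prop :=
  color t = Color.black ∧ NoRedRed t ∧ ∃ n, BH t n

/-- A 2-3 red-black tree: a red-black tree where no node has two red children. -/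
def Is23RB (t : RBTree α) : Prop := IsRB t ∧ No2Red t

/-- Recolor the root black. -/
def setBlack : RBTree α → RBTree α
  | .nil => .nil
  | .node _ l k r => .node Color.black l k r

/-- `Occurs s t`: `s` occurs as a subtree of `t`. -/
inductive Occurs : RBTree α → RBTree α → Prop where
  | refl (t : RBTree α) : Occurs t t
  | left {s l : RBTree α} (c : Color) (k : α) (r : RBTree α) :
      Occurs s l → Occurs s (RBTree.node c l k r)
  | right {s r : RBTree α} (c : Color) (k : α) (l : RBTree α) :
      Occurs s r → Occurs s (RBTree.node c l k r)

/-- `Replace s s' t t'`: `t'` is obtained from `t` by replacing one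
occurrence of the subtree `s` by `s'`. -/
inductive Replace (s s' : RBTree α) : RBTree α → RBTree α → Prop where
  | here : Replace s s' s s'
  | left {l l' : RBTree α} (c : Color) (k : α) (r : RBTree α) :
      Replace s s' l l' → Replace s s' (RBTree.node c l k r) (RBTree.node c l' k r)
  | right {r r' : RBTree α} (c : Color) (k : α) (l : RBTree α) :
      Replace s s' r r' → Replace s s' (RBTree.node c l k r) (RBTree.node c l k r')

/-- The list of black-node counts along all root-to-external paths
(in left-to-right order of the external nodes). -/
def bpaths : RBTree α → List ℕ
  | .nil => [0]
  | .node c l _ r =>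
      (bpaths l ++ bpaths r).map (fun m => m + if c = Color.black then 1 else 0)

/-- Height: the maximum number of edges on a path from the root to an external node. -/
def height : RBTree α → ℕ
  | .nil => 0
  | .node _ l _ r => max (height l) (height r) + 1

/-- Number of internal nodes. -/
def size : RBTree α → ℕ
  | .nil => 0
  | .node _ l _ r => size l + size r + 1

end RBTree

open RBTree

/-- Termination bound after Case III: in the parity-seeking
deletion algorithm for 2-3 red-black trees, suppose Case III has just been
applied: `x` (black, black-height `n`) was the deficient root with red sibling
`y = node red C ky yr`, and after the rotation the configuration is
`q = node black (node red x kp C) ky yr` with `x`'s new black sibling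
`C = node black cl ck cr`.  Then the deficiency is resolved after at most two
further rule applications:
* if `C` has a red child, one application of the Case II rotation rules yields
  a subtree with the same inorder traversal, no red-red violation, no node
  with two red children, and black count `n + 2` on all root-to-external
  paths (the pre-deletion value) — resolved in one step;
* otherwise recoloring `C` red transfers the deficiency to the now-red former
  parent `B`, which is immediately resolved by Case I (recoloring `B` black),
  again yielding a valid configuration with black count `n + 2`. -/
theorem caseIII_resolves_in_two_steps
    {α : Type} (x cl cr yr : RBTree α) (kp ck ky : α) (n : ℕ)
    (hxc : color x = Color.black) (hxrr : NoRedRed x) (hx2 : No2Red x)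
    (hxbh : BH x n)
    (hyrr : NoRedRed (RBTree.node Color.red (RBTree.node Color.black cl ck cr) ky yr))
    (hy2 : No2Red (RBTree.node Color.red (RBTree.node Color.black cl ck cr) ky yr))
    (hybh : BH (RBTree.node Color.red (RBTree.node Color.black cl ck cr) ky yr) (n + 1)) :
    -- `C` has a red far child: one Case II rotation resolves the deficiency
    (∀ (a : RBTree α) (wk : α) (b : RBTree α), cr = RBTree.node Color.red a wk b →
      inorder (RBTree.node Color.black
          (RBTree.node Color.red (RBTree.node Color.black x kp cl) ck
            (RBTree.node Color.black a wk b)) ky yr) =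
        inorder (RBTree.node Color.black
          (RBTree.node Color.red x kp (RBTree.node Color.black cl ck cr)) ky yr) ∧
      NoRedRed (RBTree.node Color.black
          (RBTree.node Color.red (RBTree.node Color.black x kp cl) ck
            (RBTree.node Color.black a wk b)) ky yr) ∧
      No2Red (RBTree.node Color.black
          (RBTree.node Color.red (RBTree.node Color.black x kp cl) ck
            (RBTree.node Color.black a wk b)) ky yr) ∧
      BH (RBTree.node Color.black
          (RBTree.node Color.red (RBTree.node Color.black x kp cl) ck
            (RBTree.node Color.black a wk b)) ky yr) (n + 2)) ∧
    -- `C` has a red near child: one Case II double rotation resolves it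
    (∀ (a : RBTree α) (wk : α) (b : RBTree α), cl = RBTree.node Color.red a wk b →
      inorder (RBTree.node Color.black
          (RBTree.node Color.red (RBTree.node Color.black x kp a) wk
            (RBTree.node Color.black b ck cr)) ky yr) =
        inorder (RBTree.node Color.black
          (RBTree.node Color.red x kp (RBTree.node Color.black cl ck cr)) ky yr) ∧
      NoRedRed (RBTree.node Color.black
          (RBTree.node Color.red (RBTree.node Color.black x kp a) wk
            (RBTree.node Color.black b ck cr)) ky yr) ∧
      No2Red (RBTree.node Color.black
          (RBTree.node Color.red (RBTree.node Color.black x kp a) wk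
            (RBTree.node Color.black b ck cr)) ky yr) ∧
      BH (RBTree.node Color.black
          (RBTree.node Color.red (RBTree.node Color.black x kp a) wk
            (RBTree.node Color.black b ck cr)) ky yr) (n + 2)) ∧
    -- both children of `C` black: recolor `C` red (Case II) and then `B` black (Case I)
    (color cl = Color.black → color cr = Color.black →
      inorder (RBTree.node Color.black
          (RBTree.node Color.black x kp (RBTree.node Color.red cl ck cr)) ky yr) =
        inorder (RBTree.node Color.black
          (RBTree.node Color.red x kp (RBTree.node Color.black cl ck cr)) ky yr) ∧
      NoRedRed (RBTree.node Color.black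
          (RBTree.node Color.black x kp (RBTree.node Color.red cl ck cr)) ky yr) ∧
      No2Red (RBTree.node Color.black
          (RBTree.node Color.black x kp (RBTree.node Color.red cl ck cr)) ky yr) ∧
      BH (RBTree.node Color.black
          (RBTree.node Color.black x kp (RBTree.node Color.red cl ck cr)) ky yr) (n + 2)) := by

  -- unpack hypotheses about y
  rcases hybh with _ | ⟨hCbh, hyrbh⟩
  rcases hCbh with _ | _ | ⟨hclbh, hcrbh⟩
  obtain ⟨hyred, hCrr, hyrrr⟩ := hyrr
  obtain ⟨hCblk, hyrblk⟩ := hyred rfl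
  obtain ⟨hCred, hclrr, hcrrr⟩ := hCrr
  obtain ⟨hy2', hC2, hyr2⟩ := hy2
  obtain ⟨hC2', hcl2, hcr2⟩ := hC2
  refine ⟨?_, ?_, ?_⟩
  · rintro a wk b rfl
    rcases hcrbh with _ | ⟨habh, hbbh⟩ | _
    obtain ⟨hcrred, harr, hbrr⟩ := hcrrr
    obtain ⟨hablk, hbblk⟩ := hcrred rfl
    obtain ⟨_, ha2, hb2⟩ := hcr2
    have hclblk : color cl = Color.black := by
      cases h : color cl
      · exact absurd ⟨h, rfl⟩ hC2'
      · rfl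
    refine ⟨by simp [inorder], ?_, ?_, ?_⟩
    · exact ⟨by simp, ⟨fun _ => ⟨rfl, rfl⟩, ⟨by simp, hxrr, hclrr⟩, ⟨by simp, harr, hbrr⟩⟩, hyrrr⟩
    · exact ⟨fun h => by rw [hyrblk] at h; simp at h, ⟨by simp [color], ⟨by simp [hxc, hclblk], hx2, hcl2⟩, ⟨by simp [hablk], ha2, hb2⟩⟩, hyr2⟩
    · exact BH.black (BH.red (BH.black hxbh hclbh) (BH.black habh hbbh)) hyrbh
  · rintro a wk b rfl
    rcases hclbh with _ | ⟨habh, hbbh⟩ | _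
    obtain ⟨hclred, harr, hbrr⟩ := hclrr
    obtain ⟨hablk, hbblk⟩ := hclred rfl
    obtain ⟨_, ha2, hb2⟩ := hcl2
    have hcrblk : color cr = Color.black := by
      cases h : color cr
      · exact absurd ⟨rfl, h⟩ hC2'
      · rfl
    refine ⟨by simp [inorder], ?_, ?_, ?_⟩
    · exact ⟨by simp, ⟨fun _ => ⟨rfl, rfl⟩, ⟨by simp, hxrr, harr⟩, ⟨by simp, hbrr, hcrrr⟩⟩, hyrrr⟩
    · exact ⟨fun h => by rw [hyrblk] at h; simp at h, ⟨by simp [color], ⟨by simp [hxc, hablk], hx2, ha2⟩, ⟨by simp [hbblk, hcrblk], hb2, hcr2⟩⟩, hyr2⟩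
    · exact BH.black (BH.red (BH.black hxbh habh) (BH.black hbbh hcrbh)) hyrbh
  · intro hclblk hcrblk
    refine ⟨by simp [inorder], ?_, ?_, ?_⟩
    · exact ⟨by simp, ⟨by simp, hxrr, ⟨fun _ => ⟨hclblk, hcrblk⟩, hclrr, hcrrr⟩⟩, hyrrr⟩
    · exact ⟨fun h => by rw [hyrblk] at h; simp at h, ⟨fun h => by rw [hxc] at h; simp at h, hx2, ⟨hC2', hcl2, hcr2⟩⟩, hyr2⟩
    · exact BH.black (BH.black hxbh (BH.red hclbh hcrbh)) hyrbh
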